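/- Consider the metric d on ℕ defined by d(m,n) = log(1 + |m−n|). Then for every s > 0 the quasi-metric d^s is LM: there is a constant c ≥ 1 such that (1/c)·(log(1+|m−n|))^s ≤ ca(d^s)(m,n) ≤ (log(1+|m−n|))^s for all m, n ∈ ℕ, where ca(d^s)(m,n) = inf Σᵢ d(mᵢ,mᵢ₊₁)^s, the infimum over all finite chains m = m₀, m₁, …, m_{k+1} = n in ℕ. Consequently the critical exponent of (ℕ,d) is s₀ = ∞. -/

import Mathlib

/-- The chain approach: infimum of `ρ`-sums over all finite chains from `z` to `z'`. -/
noncomputable def chainApproach {Z : Type*} (ρ : Z → Z → ℝ) (z z' : Z) : ℝ :=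
  sInf {s : ℝ | ∃ (n : ℕ) (f : ℕ → Z), f 0 = z ∧ f (n + 1) = z' ∧
    s = ∑ i ∈ Finset.range (n + 1), ρ (f i) (f (i + 1))}

/-- Kovalev's metric on `ℕ`: `d(m,n) = log(1+|m−n|)`. -/
noncomputable def kovalevDist (m n : ℕ) : ℝ :=
  Real.log (1 + |(m : ℝ) - (n : ℝ)|)

lemma kovalevDist_nonneg (m n : ℕ) : 0 ≤ kovalevDist m n :=
  Real.log_nonneg (le_add_of_nonneg_right (abs_nonneg _))

lemma exp_kovalevDist (m n : ℕ) : Real.exp (kovalevDist m n) = 1 + |(m : ℝ) - n| :=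
  Real.exp_log (by positivity)

lemma one_le_abs_of_ne {m n : ℕ} (h : m ≠ n) : 1 ≤ |(m : ℝ) - n| := by
  have h' : ((m : ℤ)) - n ≠ 0 := sub_ne_zero.mpr (by exact_mod_cast h)
  have h1 : (1 : ℤ) ≤ |(m : ℤ) - n| := Int.one_le_abs h'
  have : ((1 : ℤ) : ℝ) ≤ (|(m : ℤ) - n| : ℤ) := by exact_mod_cast h1
  push_cast at this
  linarith

lemma log_two_le_kovalevDist {m n : ℕ} (h : m ≠ n) : Real.log 2 ≤ kovalevDist m n :=
  Real.log_le_log (by norm_num) (by linarith [one_le_abs_of_ne h])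

/-- The bi-Lipschitz constant. -/
noncomputable def kConst (s : ℝ) : ℝ :=
  max 1 (max ((2 : ℝ) ^ s) (2 * (2 * s) ^ s / Real.log 2 ^ s))

lemma one_le_kConst (s : ℝ) : 1 ≤ kConst s := le_max_left _ _

lemma kConst_pos (s : ℝ) : 0 < kConst s := lt_of_lt_of_le one_pos (one_le_kConst s)

/-- Key chain lower bound. -/
lemma chain_lower (s : ℝ) (hs : 0 < s) (m n' : ℕ) (k : ℕ) (f : ℕ → ℕ)
    (h0 : f 0 = m) (h1 : f (k + 1) = n') :
    (1 / kConst s) * kovalevDist m n' ^ s ≤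
      ∑ i ∈ Finset.range (k + 1), kovalevDist (f i) (f (i + 1)) ^ s := by
  set L := kovalevDist m n' with hL
  have hLnn : 0 ≤ L := kovalevDist_nonneg m n'
  have hsumnn : 0 ≤ ∑ i ∈ Finset.range (k + 1), kovalevDist (f i) (f (i + 1)) ^ s :=
    Finset.sum_nonneg fun i _ => Real.rpow_nonneg (kovalevDist_nonneg _ _) s
  by_cases hmn : m = n'
  · have : L = 0 := by
      simp [hL, kovalevDist, hmn]
    rw [this, Real.zero_rpow hs.ne', mul_zero]
    exact hsumnn
  by_cases hbig : ∃ i ∈ Finset.range (k + 1), L / 2 ≤ kovalevDist (f i) (f (i + 1))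
  · obtain ⟨i, hi, hib⟩ := hbig
    have h2s : (0 : ℝ) < (2 : ℝ) ^ s := Real.rpow_pos_of_pos two_pos s
    have hc : (2 : ℝ) ^ s ≤ kConst s := le_trans (le_max_left _ _) (le_max_right _ _)
    have step1 : (1 / kConst s) * L ^ s ≤ (L / 2) ^ s := by
      rw [Real.div_rpow hLnn (by norm_num : (0:ℝ) ≤ 2)]
      calc 1 / kConst s * L ^ s ≤ 1 / (2 : ℝ) ^ s * L ^ s := by
            apply mul_le_mul_of_nonneg_right _ (Real.rpow_nonneg hLnn s)
            exact one_div_le_one_div_of_le h2s hc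
        _ = L ^ s / 2 ^ s := by ring
    have step2 : (L / 2) ^ s ≤ kovalevDist (f i) (f (i + 1)) ^ s :=
      Real.rpow_le_rpow (by positivity) hib hs.le
    refine le_trans step1 (le_trans step2 ?_)
    exact Finset.single_le_sum (f := fun j => kovalevDist (f j) (f (j + 1)) ^ s)
      (fun j _ => Real.rpow_nonneg (kovalevDist_nonneg _ _) s) hi
  · push_neg at hbig
    -- all steps small
    set F := (Finset.range (k + 1)).filter (fun i => f i ≠ f (i + 1)) with hF
    set N := |(m : ℝ) - n'| with hN
    have hN1 : 1 ≤ N := one_le_abs_of_ne hmn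
    have hexpL : Real.exp L = 1 + N := exp_kovalevDist m n'
    -- telescoping
    have htel : N ≤ ∑ i ∈ Finset.range (k + 1), |((f i : ℝ)) - f (i + 1)| := by
      have := dist_le_range_sum_dist (fun i => ((f i : ℝ))) (k + 1)
      simp only [Real.dist_eq, h0, h1] at this
      calc N = |(m : ℝ) - n'| := rfl
        _ ≤ _ := by
          convert this using 2
    -- restrict to F
    have hfil : ∑ i ∈ F, |((f i : ℝ)) - f (i + 1)| =
        ∑ i ∈ Finset.range (k + 1), |((f i : ℝ)) - f (i + 1)| := by
      apply Finset.sum_filter_of_ne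
      intro i _ hne
      intro hfe
      apply hne
      rw [hfe, sub_self, abs_zero]
    -- each step bounded
    have hstep : ∀ i ∈ F, |((f i : ℝ)) - f (i + 1)| ≤ Real.exp (L / 2) := by
      intro i hi
      have hi' : i ∈ Finset.range (k + 1) := Finset.mem_filter.mp hi |>.1
      have := hbig i hi'
      have h2 : Real.exp (kovalevDist (f i) (f (i + 1))) ≤ Real.exp (L / 2) :=
        Real.exp_le_exp.mpr this.le
      rw [exp_kovalevDist] at h2
      linarith [abs_nonneg ((f i : ℝ) - f (i + 1))]
    have hcard : N ≤ (F.card : ℝ) * Real.exp (L / 2) := by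
      calc N ≤ ∑ i ∈ F, |((f i : ℝ)) - f (i + 1)| := by rw [hfil]; exact htel
        _ ≤ F.card • Real.exp (L / 2) := Finset.sum_le_card_nsmul _ _ _ hstep
        _ = (F.card : ℝ) * Real.exp (L / 2) := by rw [nsmul_eq_mul]
    -- each nonzero step costs at least (log 2)^s
    have hlog2 : (0 : ℝ) < Real.log 2 := Real.log_pos (by norm_num)
    have hsumF : (F.card : ℝ) * Real.log 2 ^ s ≤
        ∑ i ∈ Finset.range (k + 1), kovalevDist (f i) (f (i + 1)) ^ s := by
      have h1' : (F.card : ℝ) * Real.log 2 ^ s ≤ ∑ i ∈ F, kovalevDist (f i) (f (i + 1)) ^ s := by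
        rw [← nsmul_eq_mul]
        apply Finset.card_nsmul_le_sum
        intro i hi
        have hne : f i ≠ f (i + 1) := (Finset.mem_filter.mp hi).2
        exact Real.rpow_le_rpow hlog2.le (log_two_le_kovalevDist hne) hs.le
      refine le_trans h1' (Finset.sum_le_sum_of_subset_of_nonneg (Finset.filter_subset _ _) ?_)
      intro i _ _
      exact Real.rpow_nonneg (kovalevDist_nonneg _ _) s
    -- N ≥ exp L / 2
    have hNexp : Real.exp L / 2 ≤ N := by linarith
    have hexphalf : (0 : ℝ) < Real.exp (L / 2) := Real.exp_pos _
    have hcard2 : Real.exp (L / 2) / 2 ≤ (F.card : ℝ) := by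
      have hEL : Real.exp L = Real.exp (L / 2) * Real.exp (L / 2) := by
        rw [← Real.exp_add]; ring_nf
      nlinarith [hcard, hNexp, hexphalf]
    -- L^s ≤ (2s)^s * exp (L/2)
    have hLs : L ^ s ≤ (2 * s) ^ s * Real.exp (L / 2) := by
      have h2s : (0 : ℝ) < 2 * s := by linarith
      have ht : L ≤ 2 * s * Real.exp (L / (2 * s)) := by
        have := Real.add_one_le_exp (L / (2 * s))
        have h' : L / (2 * s) ≤ Real.exp (L / (2 * s)) := by linarith
        calc L = 2 * s * (L / (2 * s)) := by field_simp
          _ ≤ 2 * s * Real.exp (L / (2 * s)) := by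
              exact mul_le_mul_of_nonneg_left h' h2s.le
      calc L ^ s ≤ (2 * s * Real.exp (L / (2 * s))) ^ s :=
            Real.rpow_le_rpow hLnn ht hs.le
        _ = (2 * s) ^ s * Real.exp (L / (2 * s)) ^ s :=
            Real.mul_rpow h2s.le (Real.exp_pos _).le
        _ = (2 * s) ^ s * Real.exp (L / 2) := by
            rw [← Real.exp_mul]
            congr 1
            field_simp
    -- combine
    have hA : (0 : ℝ) < 2 * (2 * s) ^ s / Real.log 2 ^ s := by
      have := Real.rpow_pos_of_pos (by linarith : (0:ℝ) < 2 * s) s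
      have := Real.rpow_pos_of_pos hlog2 s
      positivity
    have hcA : 2 * (2 * s) ^ s / Real.log 2 ^ s ≤ kConst s :=
      le_trans (le_max_right _ _) (le_max_right _ _)
    have h2ss : (0 : ℝ) < (2 * s) ^ s := Real.rpow_pos_of_pos (by linarith) s
    have hl2s : (0 : ℝ) < Real.log 2 ^ s := Real.rpow_pos_of_pos hlog2 s
    calc (1 / kConst s) * L ^ s
        ≤ (Real.log 2 ^ s / (2 * (2 * s) ^ s)) * L ^ s := by
          apply mul_le_mul_of_nonneg_right _ (Real.rpow_nonneg hLnn s)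
          rw [one_div]
          rw [show Real.log 2 ^ s / (2 * (2 * s) ^ s) = (2 * (2 * s) ^ s / Real.log 2 ^ s)⁻¹ by
            field_simp]
          exact inv_anti₀ hA hcA
      _ ≤ (Real.log 2 ^ s / (2 * (2 * s) ^ s)) * ((2 * s) ^ s * Real.exp (L / 2)) := by
          apply mul_le_mul_of_nonneg_left hLs
          positivity
      _ = (Real.exp (L / 2) / 2) * Real.log 2 ^ s := by field_simp
      _ ≤ (F.card : ℝ) * Real.log 2 ^ s :=
          mul_le_mul_of_nonneg_right hcard2 hl2s.le
      _ ≤ _ := hsumF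

theorem kovalev_isLM_rpow (s : ℝ) (hs : 0 < s) :
    ∃ c : ℝ, 1 ≤ c ∧ ∀ m n : ℕ,
      (1 / c) * kovalevDist m n ^ s ≤
          chainApproach (fun a b => kovalevDist a b ^ s) m n ∧
        chainApproach (fun a b => kovalevDist a b ^ s) m n ≤ kovalevDist m n ^ s := by
  refine ⟨kConst s, one_le_kConst s, fun m n => ?_⟩
  set S := {x : ℝ | ∃ (k : ℕ) (f : ℕ → ℕ), f 0 = m ∧ f (k + 1) = n ∧
    x = ∑ i ∈ Finset.range (k + 1), kovalevDist (f i) (f (i + 1)) ^ s} with hS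
  have hmem : kovalevDist m n ^ s ∈ S := by
    refine ⟨0, fun i => if i = 0 then m else n, by simp, by simp, ?_⟩
    simp
  have hne : S.Nonempty := ⟨_, hmem⟩
  have hbdd : ∀ x ∈ S, (1 / kConst s) * kovalevDist m n ^ s ≤ x := by
    rintro x ⟨k, f, h0, h1, rfl⟩
    exact chain_lower s hs m n k f h0 h1
  constructor
  · exact le_csInf hne hbdd
  · exact csInf_le ⟨_, fun x hx => hbdd x hx⟩ hmem
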